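/- Let m be a nonzero ideal of the ring of integers O of a number field K, and let a, b, g, e, f ∈ O satisfy: (g) + m = (a) + (b) + m (g is a greatest common divisor of ā and b̄ in O/m); e·g - a ∈ m and f·g - b ∈ m; N((e) + m)·N((g) + m) = N((a) + m) and N((f) + m)·N((g) + m) = N((b) + m). Then ē and f̄ are coprime in O/m, i.e. (e) + (f) + m = O. -/

import Mathlib

open NumberField

lemma eq_of_le_of_absNorm_eq' {K : Type*} [Field K] [NumberField K]
    {I J : Ideal (RingOfIntegers K)} (hle : I ≤ J) (hI : I ≠ ⊥)
    (h : Ideal.absNorm I = Ideal.absNorm J) : I = J := by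
  obtain ⟨C, hC⟩ := (Ideal.dvd_iff_le).mpr hle
  have hJ : J ≠ ⊥ := fun hJ => hI (le_bot_iff.mp (hJ ▸ hle))
  have hJn : 0 < Ideal.absNorm J := by
    simpa [Nat.pos_iff_ne_zero, Ideal.absNorm_eq_zero_iff] using hJ
  have hn : Ideal.absNorm J * 1 = Ideal.absNorm J * Ideal.absNorm C := by
    rw [mul_one, ← map_mul, ← hC, h]
  have hC1 : C = ⊤ := Ideal.absNorm_eq_one_iff.mp (Nat.eq_of_mul_eq_mul_left hJn hn).symm
  rw [hC, hC1, Ideal.mul_top]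

lemma span_sup_eq_of_sub_mem {K : Type*} [Field K] [NumberField K]
    {m : Ideal (RingOfIntegers K)} {x y : RingOfIntegers K} (h : x - y ∈ m) :
    Ideal.span {x} ⊔ m = Ideal.span {y} ⊔ m := by
  apply le_antisymm <;> rw [sup_le_iff] <;>
    refine ⟨Ideal.span_le.mpr (Set.singleton_subset_iff.mpr ?_), le_sup_right⟩
  · have : x = y + (x - y) := by ring
    rw [this]
    exact Ideal.add_mem _ (Ideal.mem_sup_left (Ideal.subset_span rfl)) (Ideal.mem_sup_right h)
  · have : y = x - (x - y) := by ring
    rw [this]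
    exact Ideal.sub_mem _ (Ideal.mem_sup_left (Ideal.subset_span rfl)) (Ideal.mem_sup_right h)

theorem stmt_11 (K : Type*) [Field K] [NumberField K]
    (m : Ideal (RingOfIntegers K)) (hm : m ≠ ⊥)
    (a b g e f : RingOfIntegers K)
    (hg : Ideal.span {g} ⊔ m = Ideal.span {a} ⊔ Ideal.span {b} ⊔ m)
    (he : e * g - a ∈ m) (hf : f * g - b ∈ m)
    (hEnorm : Ideal.absNorm (Ideal.span {e} ⊔ m) * Ideal.absNorm (Ideal.span {g} ⊔ m) =
        Ideal.absNorm (Ideal.span {a} ⊔ m))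
    (hFnorm : Ideal.absNorm (Ideal.span {f} ⊔ m) * Ideal.absNorm (Ideal.span {g} ⊔ m) =
        Ideal.absNorm (Ideal.span {b} ⊔ m)) :
    Ideal.span {e} ⊔ Ideal.span {f} ⊔ m = ⊤ := by
  have hbot : ∀ x : RingOfIntegers K, Ideal.span {x} ⊔ m ≠ ⊥ :=
    fun x h => hm (le_bot_iff.mp (h ▸ le_sup_right))
  have key : ∀ x y : RingOfIntegers K,
      (Ideal.span {x} ⊔ m) * (Ideal.span {y} ⊔ m) ≤ Ideal.span {x * y} ⊔ m := by
    intro x y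
    rw [Ideal.sup_mul, Ideal.mul_sup, Ideal.mul_sup,
      Ideal.span_singleton_mul_span_singleton]
    refine sup_le (sup_le le_sup_left ?_) (sup_le ?_ ?_)
    · exact le_trans Ideal.mul_le_right le_sup_right
    · exact le_trans Ideal.mul_le_left le_sup_right
    · exact le_trans Ideal.mul_le_right le_sup_right
  have hAeq : (Ideal.span {e} ⊔ m) * (Ideal.span {g} ⊔ m) = Ideal.span {a} ⊔ m := by
    apply eq_of_le_of_absNorm_eq'
    · exact le_trans (key e g) (le_of_eq (span_sup_eq_of_sub_mem he))
    · exact mul_ne_zero (hbot e) (hbot g)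
    · rw [Ideal.absNorm.map_mul]; exact hEnorm
  have hBeq : (Ideal.span {f} ⊔ m) * (Ideal.span {g} ⊔ m) = Ideal.span {b} ⊔ m := by
    apply eq_of_le_of_absNorm_eq'
    · exact le_trans (key f g) (le_of_eq (span_sup_eq_of_sub_mem hf))
    · exact mul_ne_zero (hbot f) (hbot g)
    · rw [Ideal.absNorm.map_mul]; exact hFnorm
  have hmain : (Ideal.span {e} ⊔ Ideal.span {f} ⊔ m) * (Ideal.span {g} ⊔ m) =
      ⊤ * (Ideal.span {g} ⊔ m) := by
    rw [Ideal.top_mul]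
    have h1 : Ideal.span {e} ⊔ Ideal.span {f} ⊔ m =
        (Ideal.span {e} ⊔ m) ⊔ (Ideal.span {f} ⊔ m) := by
      rw [sup_sup_sup_comm, sup_idem, sup_assoc]
    rw [h1, Ideal.sup_mul, hAeq, hBeq]
    have h2 : (Ideal.span {a} ⊔ m) ⊔ (Ideal.span {b} ⊔ m) =
        Ideal.span {a} ⊔ Ideal.span {b} ⊔ m := by
      rw [sup_sup_sup_comm, sup_idem]
    rw [h2]; exact hg.symm
  exact mul_right_cancel₀ (hbot g) hmain
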